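/- Let V be a complex vector space, ν ∈ ℂ with ν ≠ 1 and ν ≠ −1, and U : V³ → ℂ a trilinear map satisfying ξ_ν U = U, where ξ_ν ∈ ℂ[S₃] acts on U as a symmetry operator. Then for all x,y,z ∈ V the following four identities hold: (ν²−1)·U(z,y,x) = (ν²−ν+1)·U(x,y,z) − (2ν−1)·U(x,z,y); (ν²−1)·U(z,x,y) = −(ν²−2ν)·U(x,y,z) − (ν²−ν+1)·U(x,z,y); (ν²−1)·U(y,z,x) = −(2ν−1)·U(x,y,z) + (ν²−ν+1)·U(x,z,y); and (ν²−1)·U(y,x,z) = −(ν²−ν+1)·U(x,y,z) − (ν²−2ν)·U(x,z,y). -/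

import Mathlib

/-- The action of a group-algebra element `a ∈ 𝕂[S_r]` on an `r`-linear map:
`(aT)(v₁,…,v_r) = Σ_p a(p)·T(v_{p(1)},…,v_{p(r)})`. -/
noncomputable def gaAct {𝕂 : Type*} [RCLike 𝕂] {V : Type*} [AddCommGroup V] [Module 𝕂 V]
    {r : ℕ} (a : MonoidAlgebra 𝕂 (Equiv.Perm (Fin r)))
    (T : MultilinearMap 𝕂 (fun _ : Fin r => V) 𝕂) :
    MultilinearMap 𝕂 (fun _ : Fin r => V) 𝕂 :=
  ∑ p : Equiv.Perm (Fin r), a.coeff p • T.domDomCongr p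

/-- The idempotent `ξ_ν = (1/3)(id + ν(2 3) + (1−ν)(1 2) − ν·c + (ν−1)·c² − (1 3))` of
`ℂ[S₃]`, where `c` is the 3-cycle `1↦2↦3↦1` (0-based: `finRotate 3`). -/
noncomputable def xi (ν : ℂ) : MonoidAlgebra ℂ (Equiv.Perm (Fin 3)) :=
  (3⁻¹ : ℂ) • (MonoidAlgebra.single 1 1
    + ν • MonoidAlgebra.single (Equiv.swap (1 : Fin 3) 2) 1
    + (1 - ν) • MonoidAlgebra.single (Equiv.swap (0 : Fin 3) 1) 1
    - ν • MonoidAlgebra.single (finRotate 3) 1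
    + (ν - 1) • MonoidAlgebra.single (finRotate 3 * finRotate 3) 1
    - MonoidAlgebra.single (Equiv.swap (0 : Fin 3) 2) 1)

lemma xi_apply' (ν : ℂ) (p : Equiv.Perm (Fin 3)) : (xi ν).coeff p =
    3⁻¹ * ((MonoidAlgebra.single 1 (1:ℂ)).coeff p
      + ν * (MonoidAlgebra.single (Equiv.swap (1 : Fin 3) 2) (1:ℂ)).coeff p
      + (1-ν) * (MonoidAlgebra.single (Equiv.swap (0 : Fin 3) 1) (1:ℂ)).coeff p
      - ν * (MonoidAlgebra.single (finRotate 3) (1:ℂ)).coeff p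
      + (ν-1) * (MonoidAlgebra.single (finRotate 3 * finRotate 3) (1:ℂ)).coeff p
      - (MonoidAlgebra.single (Equiv.swap (0 : Fin 3) 2) (1:ℂ)).coeff p) := rfl

lemma xi_c1 (ν : ℂ) : (xi ν).coeff 1 = 3⁻¹ := by
  simp (config := { decide := true }) [xi_apply', MonoidAlgebra.coeff_single, Finsupp.single_apply]
lemma xi_c2 (ν : ℂ) : (xi ν).coeff (Equiv.swap 1 2) = 3⁻¹ * ν := by
  simp (config := { decide := true }) [xi_apply', MonoidAlgebra.coeff_single, Finsupp.single_apply]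
lemma xi_c3 (ν : ℂ) : (xi ν).coeff (Equiv.swap 0 1) = 3⁻¹ * (1-ν) := by
  simp (config := { decide := true }) [xi_apply', MonoidAlgebra.coeff_single, Finsupp.single_apply]
lemma xi_c4 (ν : ℂ) : (xi ν).coeff (finRotate 3) = 3⁻¹ * (-ν) := by
  simp (config := { decide := true }) [xi_apply', MonoidAlgebra.coeff_single, Finsupp.single_apply]
lemma xi_c5 (ν : ℂ) : (xi ν).coeff (finRotate 3 * finRotate 3) = 3⁻¹ * (ν-1) := by
  simp (config := { decide := true }) [xi_apply', MonoidAlgebra.coeff_single, Finsupp.single_apply]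
lemma xi_c6 (ν : ℂ) : (xi ν).coeff (Equiv.swap 0 2) = 3⁻¹ * (-1) := by
  simp (config := { decide := true }) [xi_apply', MonoidAlgebra.coeff_single, Finsupp.single_apply]

lemma key_eqn {V : Type*} [AddCommGroup V] [Module ℂ V] (ν : ℂ)
    (U : MultilinearMap ℂ (fun _ : Fin 3 => V) ℂ) (hU : gaAct (xi ν) U = U)
    (a b c : V) :
    U ![a,b,c] + ν * U ![a,c,b] + (1-ν) * U ![b,a,c] - ν * U ![b,c,a]
      + (ν-1) * U ![c,a,b] - U ![c,b,a] = 3 * U ![a,b,c] := by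
  have h := DFunLike.congr_fun hU ![a,b,c]
  rw [gaAct] at h
  rw [show (Finset.univ : Finset (Equiv.Perm (Fin 3))) =
    {1, Equiv.swap 1 2, Equiv.swap 0 1, finRotate 3, finRotate 3 * finRotate 3, Equiv.swap 0 2}
    from by decide] at h
  rw [Finset.sum_insert (by decide), Finset.sum_insert (by decide),
    Finset.sum_insert (by decide), Finset.sum_insert (by decide),
    Finset.sum_insert (by decide), Finset.sum_singleton] at h
  simp only [MultilinearMap.add_apply, MultilinearMap.smul_apply,
    MultilinearMap.domDomCongr_apply, smul_eq_mul] at h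
  rw [show (fun i => ![a,b,c] ((1 : Equiv.Perm (Fin 3)) i)) = ![a,b,c] from by
      funext i; fin_cases i <;> rfl,
    show (fun i => ![a,b,c] (Equiv.swap (1:Fin 3) 2 i)) = ![a,c,b] from by
      funext i; fin_cases i <;> rfl,
    show (fun i => ![a,b,c] (Equiv.swap (0:Fin 3) 1 i)) = ![b,a,c] from by
      funext i; fin_cases i <;> rfl,
    show (fun i => ![a,b,c] (finRotate 3 i)) = ![b,c,a] from by
      funext i; fin_cases i <;> rfl,
    show (fun i => ![a,b,c] ((finRotate 3 * finRotate 3) i)) = ![c,a,b] from by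
      funext i; fin_cases i <;> rfl,
    show (fun i => ![a,b,c] (Equiv.swap (0:Fin 3) 2 i)) = ![c,b,a] from by
      funext i; fin_cases i <;> rfl,
    xi_c1, xi_c2, xi_c3, xi_c4, xi_c5, xi_c6] at h
  linear_combination 3 * h

theorem stmt18 {V : Type*} [AddCommGroup V] [Module ℂ V]
    (ν : ℂ) (hν1 : ν ≠ 1) (hν2 : ν ≠ -1)
    (U : MultilinearMap ℂ (fun _ : Fin 3 => V) ℂ)
    (hU : gaAct (xi ν) U = U) :
    ∀ x y z : V,
      (ν ^ 2 - 1) * U ![z, y, x] =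
        (ν ^ 2 - ν + 1) * U ![x, y, z] - (2 * ν - 1) * U ![x, z, y] ∧
      (ν ^ 2 - 1) * U ![z, x, y] =
        -(ν ^ 2 - 2 * ν) * U ![x, y, z] - (ν ^ 2 - ν + 1) * U ![x, z, y] ∧
      (ν ^ 2 - 1) * U ![y, z, x] =
        -(2 * ν - 1) * U ![x, y, z] + (ν ^ 2 - ν + 1) * U ![x, z, y] ∧
      (ν ^ 2 - 1) * U ![y, x, z] =
        -(ν ^ 2 - ν + 1) * U ![x, y, z] - (ν ^ 2 - 2 * ν) * U ![x, z, y] := by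
  intro x y z
  have h1 := key_eqn ν U hU x y z
  have h2 := key_eqn ν U hU x z y
  have h3 := key_eqn ν U hU y x z
  have h4 := key_eqn ν U hU y z x
  have h5 := key_eqn ν U hU z x y
  have h6 := key_eqn ν U hU z y x
  refine ⟨?_, ?_, ?_, ?_⟩
  · linear_combination ((2-ν)/3) * h1 + ((2-2*ν-ν^2)/3) * h2 + ((ν^2-1)/3) * h4
  · linear_combination ((2*ν-ν^2)/3) * h1 + ((ν-2)/3) * h2 + ((1-ν^2)/3) * h3 + ((1-ν^2)/3) * h4
  · linear_combination ((1-2*ν)/3) * h1 + ((1-ν+ν^2)/3) * h2 + ((1-ν^2)/3) * h4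
  · linear_combination (-(1-ν+ν^2)/3) * h1 + ((2*ν-ν^2)/3) * h2 + ((1-ν^2)/3) * h3
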